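/- Schemas built only from logical operators are trivial: let S be a closed schema all of whose subschemas are true, false, or objects whose keywords are among anyOf, allOf, oneOf, not, $ref, $dynamicRef, $anchor, $dynamicAnchor, $id, $defs. Then for every context C and all JSON instances J and J': if C,J ⊢S S → (r,κ) and C,J' ⊢S S → (r',κ') are derivable, then r = r' and κ = κ' = ∅; that is, the validation result does not depend on the instance and no annotations are produced. -/

import Mathlib

/-!
Formalization of the minimal fragment of Modern JSON Schema (Draft 2020-12)
following Attouche, Baazizi, Colazzo, Ghelli, Sartiani, Scherzinger,
"Validation of Modern JSON Schema: Formalization and Complexity".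
-/

namespace MJS

/-- JSON types. -/
inductive JTy : Type
  | null | boolean | number | string | array | object
  deriving DecidableEq

/-- JSON values: base values, arrays and objects (objects are supposed to have
pairwise distinct member names). -/
inductive JVal : Type
  | null : JVal
  | bool : Bool → JVal
  | num : ℚ → JVal
  | str : String → JVal
  | arr : List JVal → JVal
  | obj : List (String × JVal) → JVal

def typeOf : JVal → JTy
  | .null => .null
  | .bool _ => .boolean
  | .num _ => .number
  | .str _ => .string
  | .arr _ => .array
  | .obj _ => .object

-- Schemas of the minimal fragment: `true`, `false`, or an object of keywords.
mutual
  inductive Schema : Type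
    | tru : Schema
    | fls : Schema
    | obj : List Keyword → Schema

  inductive Keyword : Type
    | type : JTy → Keyword
    | minimum : ℚ → Keyword
    | pattern : String → Keyword
    | properties : List (String × Schema) → Keyword
    | patternProperties : List (String × Schema) → Keyword
    | anyOf : List Schema → Keyword
    | allOf : List Schema → Keyword
    | oneOf : List Schema → Keyword
    | not : Schema → Keyword
    | ref : String → String → Keyword
    | dynamicRef : String → String → Keyword
    | anchor : String → Keyword
    | dynamicAnchor : String → Keyword
    | id : String → Keyword
    | defs : List (String × Schema) → Keyword
    | additionalProperties : Schema → Keyword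
    | items : Schema → Keyword
    | unevaluatedProperties : Schema → Keyword
    | unevaluatedItems : Schema → Keyword
end

/-- Annotations: evaluated object member names, or evaluated array positions (1-based). -/
abbrev Ann := String ⊕ ℕ

/-- A context is a list of absolute URIs (without repetitions). -/
abbrev Ctx := List String

/-- Saturation `C +? u`. -/
def saturate (C : Ctx) (u : String) : Ctx := if u ∈ C then C else C ++ [u]

/-- The environment of a closed schema: `load` maps each absolute URI to its
resource, `get R f` returns the subschema of `R` named by the (static or
dynamic) anchor `f`, `dget R f` returns the subschema of `R` carrying
`$dynamicAnchor : f` (`none` if there is none), and `lang p s` tells whether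
the string `s` belongs to the language of the pattern `p`. -/
structure Env where
  load : String → Schema
  get : Schema → String → Option Schema
  dget : Schema → String → Option Schema
  lang : String → String → Bool

/-- `fstURI C f`: the first URI `u` of the list `C` with `dget (load u) f ≠ ⊥`. -/
def fstURI (E : Env) (C : Ctx) (f : String) : Option String :=
  C.find? fun u => (E.dget (E.load u) f).isSome

def Schema.keywords : Schema → List Keyword
  | .obj ks => ks
  | _ => []

/-- The four annotation-dependent keywords. -/
def Keyword.isDependent : Keyword → Bool
  | .additionalProperties _ => true
  | .items _ => true
  | .unevaluatedProperties _ => true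
  | .unevaluatedItems _ => true
  | _ => false

/-- `propsOf`: a member name `k` is directly matched by an adjacent
`properties`/`patternProperties` keyword of the list `Ks`. -/
def keyMatchedB (E : Env) (Ks : List Keyword) (k : String) : Bool :=
  Ks.any fun K =>
    match K with
    | .properties kvs => kvs.any fun kv => kv.1 == k
    | .patternProperties kvs => kvs.any fun kv => E.lang kv.1 k
    | _ => false

def objNames (members : List (String × JVal)) : Finset Ann :=
  (members.map fun m => (Sum.inl m.1 : Ann)).toFinset

def arrPositions (n : ℕ) : Finset Ann :=
  (Finset.range n).image fun i => (Sum.inr (i + 1) : Ann)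

def listUnion (l : List (Finset Ann)) : Finset Ann := l.foldr (· ∪ ·) ∅

/-- The pairs (member value, subschema) matched by a `properties` keyword. -/
def matchedPairs (members : List (String × JVal)) (kvs : List (String × Schema)) :
    List (JVal × Schema) :=
  members.flatMap fun m => kvs.filterMap fun kv =>
    if m.1 = kv.1 then some (m.2, kv.2) else none

def matchedNames (members : List (String × JVal)) (kvs : List (String × Schema)) :
    Finset Ann :=
  ((members.filter fun m => kvs.any fun kv => kv.1 == m.1).map
    fun m => (Sum.inl m.1 : Ann)).toFinset

/-- The pairs (member value, subschema) matched by a `patternProperties` keyword. -/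
def patMatchedPairs (E : Env) (members : List (String × JVal))
    (kvs : List (String × Schema)) : List (JVal × Schema) :=
  members.flatMap fun m => kvs.filterMap fun kv =>
    if E.lang kv.1 m.1 then some (m.2, kv.2) else none

def patMatchedNames (E : Env) (members : List (String × JVal))
    (kvs : List (String × Schema)) : Finset Ann :=
  ((members.filter fun m => kvs.any fun kv => E.lang kv.1 m.1).map
    fun m => (Sum.inl m.1 : Ann)).toFinset

/-- Object members whose name is matched by no adjacent
`properties`/`patternProperties` keyword (used by `additionalProperties`). -/
def unmatchedMembers (E : Env) (Ks : List Keyword) (members : List (String × JVal)) :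
    List (String × JVal) :=
  members.filter fun m => !(keyMatchedB E Ks m.1)

/-- Array items whose (1-based) position is not among the accumulated annotations
(used by `unevaluatedItems`). -/
def unevalIdx (is : List JVal) (κ : Finset Ann) : List JVal :=
  ((is.zipIdx.map Prod.swap).filter fun p => !(decide ((Sum.inr (p.1 + 1) : Ann) ∈ κ))).map (·.2)

/-- Object members whose name is not among the accumulated annotations
(used by `unevaluatedProperties`). -/
def unevalMembers (members : List (String × JVal)) (κ : Finset Ann) :
    List (String × JVal) :=
  members.filter fun m => !(decide ((Sum.inl m.1 : Ann) ∈ κ))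

mutual
  /-- The schema judgment `C, J ⊢S S → (r, κ)`. -/
  inductive SJudg (E : Env) : Ctx → JVal → Schema → Bool → Finset Ann → Prop
    | tru {C J} : SJudg E C J .tru true ∅
    | fls {C J} : SJudg E C J .fls false ∅
    | objT {C J Ks κ} : LJudg E C J Ks true κ → SJudg E C J (.obj Ks) true κ
    | objF {C J Ks κ} : LJudg E C J Ks false κ → SJudg E C J (.obj Ks) false ∅

  /-- The keyword judgment `C, J ⊢K K → (r, κ)`. -/
  inductive KJudg (E : Env) : Ctx → JVal → Keyword → Bool → Finset Ann → Prop
    | type {C J t} : KJudg E C J (.type t) (typeOf J == t) ∅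
    | minimumTriv {C J q} : typeOf J ≠ .number → KJudg E C J (.minimum q) true ∅
    | minimum {C d q} : KJudg E C (.num d) (.minimum q) (decide (q ≤ d)) ∅
    | patternTriv {C J p} : typeOf J ≠ .string → KJudg E C J (.pattern p) true ∅
    | pattern {C s p} : KJudg E C (.str s) (.pattern p) (E.lang p s) ∅
    | anchor {C J a} : KJudg E C J (.anchor a) true ∅
    | dynamicAnchor {C J a} : KJudg E C J (.dynamicAnchor a) true ∅
    | id {C J u} : KJudg E C J (.id u) true ∅
    | defs {C J kvs} : KJudg E C J (.defs kvs) true ∅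
    | anyOf {C J l} (rs : List (Bool × Finset Ann)) :
        rs.length = l.length →
        (∀ i (h1 : i < l.length) (h2 : i < rs.length),
          SJudg E C J (l.get ⟨i, h1⟩) (rs.get ⟨i, h2⟩).1 (rs.get ⟨i, h2⟩).2) →
        KJudg E C J (.anyOf l) (rs.any (·.1)) (listUnion (rs.map (·.2)))
    | allOf {C J l} (rs : List (Bool × Finset Ann)) :
        rs.length = l.length →
        (∀ i (h1 : i < l.length) (h2 : i < rs.length),
          SJudg E C J (l.get ⟨i, h1⟩) (rs.get ⟨i, h2⟩).1 (rs.get ⟨i, h2⟩).2) →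
        KJudg E C J (.allOf l) (rs.all (·.1)) (listUnion (rs.map (·.2)))
    | oneOf {C J l} (rs : List (Bool × Finset Ann)) :
        rs.length = l.length →
        (∀ i (h1 : i < l.length) (h2 : i < rs.length),
          SJudg E C J (l.get ⟨i, h1⟩) (rs.get ⟨i, h2⟩).1 (rs.get ⟨i, h2⟩).2) →
        KJudg E C J (.oneOf l) (rs.countP (·.1) == 1) (listUnion (rs.map (·.2)))
    | not {C J S r σ} : SJudg E C J S r σ → KJudg E C J (.not S) (!r) σ
    | propertiesTriv {C J kvs} : typeOf J ≠ .object → KJudg E C J (.properties kvs) true ∅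
    | properties {C members kvs} (rs : List (Bool × Finset Ann)) :
        rs.length = (matchedPairs members kvs).length →
        (∀ i (h1 : i < (matchedPairs members kvs).length) (h2 : i < rs.length),
          SJudg E C ((matchedPairs members kvs).get ⟨i, h1⟩).1
            ((matchedPairs members kvs).get ⟨i, h1⟩).2
            (rs.get ⟨i, h2⟩).1 (rs.get ⟨i, h2⟩).2) →
        KJudg E C (.obj members) (.properties kvs) (rs.all (·.1)) (matchedNames members kvs)
    | patternPropertiesTriv {C J kvs} : typeOf J ≠ .object →
        KJudg E C J (.patternProperties kvs) true ∅
    | patternProperties {C members kvs} (rs : List (Bool × Finset Ann)) :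
        rs.length = (patMatchedPairs E members kvs).length →
        (∀ i (h1 : i < (patMatchedPairs E members kvs).length) (h2 : i < rs.length),
          SJudg E C ((patMatchedPairs E members kvs).get ⟨i, h1⟩).1
            ((patMatchedPairs E members kvs).get ⟨i, h1⟩).2
            (rs.get ⟨i, h2⟩).1 (rs.get ⟨i, h2⟩).2) →
        KJudg E C (.obj members) (.patternProperties kvs) (rs.all (·.1))
          (patMatchedNames E members kvs)
    | ref {C J u f S' r σ} :
        E.get (E.load u) f = some S' →
        SJudg E (saturate C u) J S' r σ →
        KJudg E C J (.ref u f) r σ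
    | dynamicRefAsRef {C J u f S' r σ} :
        E.dget (E.load u) f = none →
        E.get (E.load u) f = some S' →
        SJudg E (saturate C u) J S' r σ →
        KJudg E C J (.dynamicRef u f) r σ
    | dynamicRef {C J u f v S' r σ} :
        (E.dget (E.load u) f).isSome →
        fstURI E (saturate C u) f = some v →
        E.dget (E.load v) f = some S' →
        SJudg E (saturate C v) J S' r σ →
        KJudg E C J (.dynamicRef u f) r σ

  /-- The keyword-list judgment `C, J ⊢L ⟨K1,…,Kn⟩ → (r, κ)`; keywords are
  evaluated left to right, and the four dependent keywords exploit the
  annotations accumulated by the preceding keywords. -/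
  inductive LJudg (E : Env) : Ctx → JVal → List Keyword → Bool → Finset Ann → Prop
    | nil {C J} : LJudg E C J [] true ∅
    | snocIndep {C J Ks K rl κl r κ} :
        K.isDependent = false →
        LJudg E C J Ks rl κl →
        KJudg E C J K r κ →
        LJudg E C J (Ks ++ [K]) (rl && r) (κl ∪ κ)
    | additionalPropertiesTriv {C J Ks S rl κl} :
        typeOf J ≠ .object →
        LJudg E C J Ks rl κl →
        LJudg E C J (Ks ++ [.additionalProperties S]) rl κl
    | additionalProperties {C members Ks S rl κl} (rs : List (Bool × Finset Ann)) :
        LJudg E C (.obj members) Ks rl κl →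
        rs.length = (unmatchedMembers E Ks members).length →
        (∀ i (h1 : i < (unmatchedMembers E Ks members).length) (h2 : i < rs.length),
          SJudg E C ((unmatchedMembers E Ks members).get ⟨i, h1⟩).2 S
            (rs.get ⟨i, h2⟩).1 (rs.get ⟨i, h2⟩).2) →
        LJudg E C (.obj members) (Ks ++ [.additionalProperties S])
          (rl && rs.all (·.1)) (objNames members)
    | unevaluatedPropertiesTriv {C J Ks S rl κl} :
        typeOf J ≠ .object →
        LJudg E C J Ks rl κl →
        LJudg E C J (Ks ++ [.unevaluatedProperties S]) rl κl
    | unevaluatedProperties {C members Ks S rl κl} (rs : List (Bool × Finset Ann)) :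
        LJudg E C (.obj members) Ks rl κl →
        rs.length = (unevalMembers members κl).length →
        (∀ i (h1 : i < (unevalMembers members κl).length) (h2 : i < rs.length),
          SJudg E C ((unevalMembers members κl).get ⟨i, h1⟩).2 S
            (rs.get ⟨i, h2⟩).1 (rs.get ⟨i, h2⟩).2) →
        LJudg E C (.obj members) (Ks ++ [.unevaluatedProperties S])
          (rl && rs.all (·.1)) (objNames members)
    | itemsTriv {C J Ks S rl κl} :
        typeOf J ≠ .array →
        LJudg E C J Ks rl κl →
        LJudg E C J (Ks ++ [.items S]) rl κl
    | items {C is Ks S rl κl} (rs : List (Bool × Finset Ann)) :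
        LJudg E C (.arr is) Ks rl κl →
        rs.length = is.length →
        (∀ i (h1 : i < is.length) (h2 : i < rs.length),
          SJudg E C (is.get ⟨i, h1⟩) S (rs.get ⟨i, h2⟩).1 (rs.get ⟨i, h2⟩).2) →
        LJudg E C (.arr is) (Ks ++ [.items S]) (rl && rs.all (·.1))
          (arrPositions is.length)
    | unevaluatedItemsTriv {C J Ks S rl κl} :
        typeOf J ≠ .array →
        LJudg E C J Ks rl κl →
        LJudg E C J (Ks ++ [.unevaluatedItems S]) rl κl
    | unevaluatedItems {C is Ks S rl κl} (rs : List (Bool × Finset Ann)) :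
        LJudg E C (.arr is) Ks rl κl →
        rs.length = (unevalIdx is κl).length →
        (∀ i (h1 : i < (unevalIdx is κl).length) (h2 : i < rs.length),
          SJudg E C ((unevalIdx is κl).get ⟨i, h1⟩) S
            (rs.get ⟨i, h2⟩).1 (rs.get ⟨i, h2⟩).2) →
        LJudg E C (.arr is) (Ks ++ [.unevaluatedItems S]) (rl && rs.all (·.1))
          (arrPositions is.length)
end

end MJS
namespace MJS

/-- The subschemas occurring directly inside a keyword. -/
def Keyword.subschemas : Keyword → List Schema
  | .not s => [s]
  | .anyOf l => l
  | .allOf l => l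
  | .oneOf l => l
  | .properties kvs => kvs.map (·.2)
  | .patternProperties kvs => kvs.map (·.2)
  | .defs kvs => kvs.map (·.2)
  | .additionalProperties s => [s]
  | .items s => [s]
  | .unevaluatedProperties s => [s]
  | .unevaluatedItems s => [s]
  | _ => []

/-- `S'` is an immediate subschema of `S`. -/
def ImmSub (S' S : Schema) : Prop := ∃ K ∈ S.keywords, S' ∈ K.subschemas

/-- `Subschema S' S`: `S'` is a (reflexive, transitive) subschema of `S`. -/
def Subschema : Schema → Schema → Prop := Relation.ReflTransGen ImmSub

/-- The subschemas occurring directly inside a boolean applicator keyword. -/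
def Keyword.boolSubschemas : Keyword → List Schema
  | .not s => [s]
  | .anyOf l => l
  | .allOf l => l
  | .oneOf l => l
  | _ => []

def ImmBoolSub (S' S : Schema) : Prop := ∃ K ∈ S.keywords, S' ∈ K.boolSubschemas

/-- `BoolSub S' S`: `S'` is reachable from `S` through boolean applicator
keywords only. -/
def BoolSub : Schema → Schema → Prop := Relation.ReflTransGen ImmBoolSub

/-- `Si` unguardedly references `Sj`: some subschema `S'` of `Si`, with only
boolean applicators on the path from `Si` to `S'`, contains a keyword
`$ref : absURI#f` with `get (load absURI) f = Sj`, or contains a keyword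
`$dynamicRef : absURI#f` while `Sj` contains `$dynamicAnchor : f`. -/
def UnguardedRef (E : Env) (Si Sj : Schema) : Prop :=
  ∃ S', BoolSub S' Si ∧
    ((∃ u f, Keyword.ref u f ∈ S'.keywords ∧ E.get (E.load u) f = some Sj) ∨
     (∃ u f, Keyword.dynamicRef u f ∈ S'.keywords ∧
        Keyword.dynamicAnchor f ∈ Sj.keywords))

/-- A closed schema is well-formed when the graph of the unguardedly-references
relation on its subschemas is acyclic. -/
def WellFormed (E : Env) (S0 : Schema) : Prop :=
  ∀ S, ¬ Relation.TransGen
    (fun a b => Subschema a S0 ∧ Subschema b S0 ∧ UnguardedRef E a b) S S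

/-- A schema is closed when every resource recursively reachable from it
through (static or dynamic) references is embedded in it. -/
def Closed (E : Env) (S0 : Schema) : Prop :=
  ∀ S, Subschema S S0 → ∀ u f,
    (Keyword.ref u f ∈ S.keywords ∨ Keyword.dynamicRef u f ∈ S.keywords) →
    Subschema (E.load u) S0

/-- A context formed using URIs of resources of `S0`. -/
def CtxOf (E : Env) (S0 : Schema) (C : Ctx) : Prop :=
  C.Nodup ∧ ∀ u ∈ C, Subschema (E.load u) S0

/-- Coherence of the environment: `get R f` and `dget R f` return subschemas
of `R`, and `dget R f` returns a subschema carrying `$dynamicAnchor : f`. -/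
def EnvCoherent (E : Env) : Prop :=
  (∀ R f S, E.get R f = some S → Subschema S R) ∧
  (∀ R f S, E.dget R f = some S →
    Subschema S R ∧ Keyword.dynamicAnchor f ∈ S.keywords)

end MJS
namespace MJS

/-- A keyword is logical when it is among `anyOf`, `allOf`, `oneOf`, `not`,
`$ref`, `$dynamicRef`, `$anchor`, `$dynamicAnchor`, `$id`, `$defs`. -/
def Keyword.isLogical : Keyword → Prop
  | .anyOf _ => True
  | .allOf _ => True
  | .oneOf _ => True
  | .not _ => True
  | .ref _ _ => True
  | .dynamicRef _ _ => True
  | .anchor _ => True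
  | .dynamicAnchor _ => True
  | .id _ => True
  | .defs _ => True
  | _ => False

/-- All subschemas of `S0` are `true`, `false`, or objects whose keywords are
logical. -/
def Logical (S0 : Schema) : Prop :=
  ∀ S, Subschema S S0 → ∀ K ∈ S.keywords, K.isLogical


private lemma listUnion_map_empty {rs : List (Bool × Finset Ann)}
    (h : ∀ i (h2 : i < rs.length), (rs.get ⟨i, h2⟩).2 = ∅) :
    listUnion (rs.map (·.2)) = ∅ := by
  induction rs with
  | nil => rfl
  | cons a t ih =>
      have ha : a.2 = ∅ := h 0 (Nat.succ_pos _)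
      have ht := ih (fun i hi => h (i + 1) (Nat.succ_lt_succ hi))
      simp only [listUnion, List.map_cons, List.foldr_cons] at *
      rw [ha, ht]
      simp

private lemma rs_det {E : Env} {C : Ctx} {J' : JVal} {l : List Schema}
    {rs rs' : List (Bool × Finset Ann)}
    (hlen : rs.length = l.length) (hlen' : rs'.length = l.length)
    (hIH : ∀ i (h1 : i < l.length) (h2 : i < rs.length),
      (rs.get ⟨i, h2⟩).2 = ∅ ∧
      ∀ J'' r' κ', SJudg E C J'' (l.get ⟨i, h1⟩) r' κ' → (rs.get ⟨i, h2⟩).1 = r' ∧ κ' = ∅)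
    (hd : ∀ i (h1 : i < l.length) (h2 : i < rs'.length),
      SJudg E C J' (l.get ⟨i, h1⟩) (rs'.get ⟨i, h2⟩).1 (rs'.get ⟨i, h2⟩).2) :
    rs = rs' := by
  apply List.ext_get (by omega)
  intro i h2 h2'
  have h1 : i < l.length := by omega
  obtain ⟨he, hinn⟩ := hIH i h1 h2
  obtain ⟨hb, he'⟩ := hinn _ _ _ (hd i h1 h2')
  exact Prod.ext hb (he.trans he'.symm)

private lemma ctxOf_saturate {E : Env} {S : Schema} {C : Ctx} {u : String}
    (hC : CtxOf E S C) (hu : Subschema (E.load u) S) : CtxOf E S (saturate C u) := by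
  unfold saturate
  split
  · exact hC
  · refine ⟨?_, ?_⟩
    · simp [List.nodup_append, hC.1]; intro a ha hau; exact ‹u ∉ C› (hau ▸ ha)
    · intro v hv
      rcases List.mem_append.1 hv with h | h
      · exact hC.2 v h
      · simp at h; subst h; exact hu


private lemma LJudg_nil_inv {E : Env} {C : Ctx} {J : JVal} {r : Bool} {κ : Finset Ann}
    (h : LJudg E C J [] r κ) : r = true ∧ κ = ∅ := by
  generalize hL : ([] : List Keyword) = L at h
  cases h <;> first
    | exact ⟨rfl, rfl⟩
    | (exfalso; simp at hL)

private lemma LJudg_snoc_inv {E : Env} {C : Ctx} {J : JVal} {Ks : List Keyword}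
    {K : Keyword} {r : Bool} {κ : Finset Ann} (h : LJudg E C J (Ks ++ [K]) r κ) :
    K.isDependent = true ∨
      ∃ rl κl r0 κ0, LJudg E C J Ks rl κl ∧ KJudg E C J K r0 κ0 ∧
        r = (rl && r0) ∧ κ = κl ∪ κ0 := by
  generalize hL : Ks ++ [K] = L at h
  cases h with
  | nil => exact absurd hL (by simp)
  | snocIndep hdep hl hk =>
      obtain ⟨h1, h2⟩ := List.append_inj' hL rfl
      injection h2 with h2 _
      subst h1
      subst h2
      exact Or.inr ⟨_, _, _, _, hl, hk, rfl, rfl⟩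
  | additionalPropertiesTriv h1 h2 =>
      obtain ⟨h1, h2⟩ := List.append_inj' hL rfl
      injection h2 with h2 _
      subst h2
      exact Or.inl rfl
  | additionalProperties rs h1 h2 h3 =>
      obtain ⟨h1, h2⟩ := List.append_inj' hL rfl
      injection h2 with h2 _
      subst h2
      exact Or.inl rfl
  | unevaluatedPropertiesTriv h1 h2 =>
      obtain ⟨h1, h2⟩ := List.append_inj' hL rfl
      injection h2 with h2 _
      subst h2
      exact Or.inl rfl
  | unevaluatedProperties rs h1 h2 h3 =>
      obtain ⟨h1, h2⟩ := List.append_inj' hL rfl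
      injection h2 with h2 _
      subst h2
      exact Or.inl rfl
  | itemsTriv h1 h2 =>
      obtain ⟨h1, h2⟩ := List.append_inj' hL rfl
      injection h2 with h2 _
      subst h2
      exact Or.inl rfl
  | items rs h1 h2 h3 =>
      obtain ⟨h1, h2⟩ := List.append_inj' hL rfl
      injection h2 with h2 _
      subst h2
      exact Or.inl rfl
  | unevaluatedItemsTriv h1 h2 =>
      obtain ⟨h1, h2⟩ := List.append_inj' hL rfl
      injection h2 with h2 _
      subst h2
      exact Or.inl rfl
  | unevaluatedItems rs h1 h2 h3 =>
      obtain ⟨h1, h2⟩ := List.append_inj' hL rfl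
      injection h2 with h2 _
      subst h2
      exact Or.inl rfl

theorem statement5_aux (E : Env) (S : Schema)
    (hcoh : EnvCoherent E) (hclosed : Closed E S) (hlog : Logical S)
    {C : Ctx} {J : JVal} {Sc : Schema} {r : Bool} {κ : Finset Ann}
    (h : SJudg E C J Sc r κ) :
    Subschema Sc S → CtxOf E S C →
      κ = ∅ ∧ ∀ J' r' κ', SJudg E C J' Sc r' κ' → r = r' ∧ κ' = ∅ := by
  induction h using SJudg.rec
    (motive_2 := fun C J K r κ _ =>
      (∃ Sc, Subschema Sc S ∧ K ∈ Sc.keywords) → CtxOf E S C →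
        κ = ∅ ∧ ∀ J' r' κ', KJudg E C J' K r' κ' → r = r' ∧ κ' = ∅)
    (motive_3 := fun C J Ks r κ _ =>
      (∃ Sc, Subschema Sc S ∧ ∀ K ∈ Ks, K ∈ Sc.keywords) → CtxOf E S C →
        κ = ∅ ∧ ∀ J' r' κ', LJudg E C J' Ks r' κ' → r = r' ∧ κ' = ∅)
  case tru =>
    intro _ _
    refine ⟨rfl, ?_⟩
    intro J' r' κ' hJ'
    cases hJ'
    exact ⟨rfl, rfl⟩
  case fls =>
    intro _ _
    refine ⟨rfl, ?_⟩
    intro J' r' κ' hJ'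
    cases hJ'
    exact ⟨rfl, rfl⟩
  case objT =>
    rename_i Cx Jx Ks κx hL IH
    intro hSub hC
    obtain ⟨hκ, hinner⟩ := IH ⟨.obj Ks, hSub, fun K hK => hK⟩ hC
    refine ⟨hκ, ?_⟩
    intro J' r' κ' hJ'
    cases hJ' with
    | objT h' => exact ⟨rfl, (hinner J' true κ' h').2⟩
    | objF h' => exact absurd (hinner J' false _ h').1 (by simp)
  case objF =>
    rename_i Cx Jx Ks κx hL IH
    intro hSub hC
    obtain ⟨hκ, hinner⟩ := IH ⟨.obj Ks, hSub, fun K hK => hK⟩ hC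
    refine ⟨rfl, ?_⟩
    intro J' r' κ' hJ'
    cases hJ' with
    | objT h' => exact absurd (hinner J' true _ h').1 (by simp)
    | objF h' => exact ⟨rfl, rfl⟩
  -- non-logical keywords: impossible
  case type =>
    rename_i hSub hC
    obtain ⟨Sc, hScS, hmem⟩ := hSub
    exact absurd (hlog Sc hScS _ hmem) (by simp [Keyword.isLogical])
  case minimumTriv =>
    rename_i hSub hC
    obtain ⟨Sc, hScS, hmem⟩ := hSub
    exact absurd (hlog Sc hScS _ hmem) (by simp [Keyword.isLogical])
  case minimum =>
    rename_i hSub hC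
    obtain ⟨Sc, hScS, hmem⟩ := hSub
    exact absurd (hlog Sc hScS _ hmem) (by simp [Keyword.isLogical])
  case patternTriv =>
    rename_i hSub hC
    obtain ⟨Sc, hScS, hmem⟩ := hSub
    exact absurd (hlog Sc hScS _ hmem) (by simp [Keyword.isLogical])
  case pattern =>
    rename_i hSub hC
    obtain ⟨Sc, hScS, hmem⟩ := hSub
    exact absurd (hlog Sc hScS _ hmem) (by simp [Keyword.isLogical])
  case propertiesTriv =>
    rename_i hSub hC
    obtain ⟨Sc, hScS, hmem⟩ := hSub
    exact absurd (hlog Sc hScS _ hmem) (by simp [Keyword.isLogical])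
  case properties =>
    rename_i hSub hC
    obtain ⟨Sc, hScS, hmem⟩ := hSub
    exact absurd (hlog Sc hScS _ hmem) (by simp [Keyword.isLogical])
  case patternPropertiesTriv =>
    rename_i hSub hC
    obtain ⟨Sc, hScS, hmem⟩ := hSub
    exact absurd (hlog Sc hScS _ hmem) (by simp [Keyword.isLogical])
  case patternProperties =>
    rename_i hSub hC
    obtain ⟨Sc, hScS, hmem⟩ := hSub
    exact absurd (hlog Sc hScS _ hmem) (by simp [Keyword.isLogical])
  -- trivial logical keywords
  case anchor =>
    refine ⟨rfl, ?_⟩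
    intro J' r' κ' hJ'
    cases hJ'
    exact ⟨rfl, rfl⟩
  case dynamicAnchor =>
    refine ⟨rfl, ?_⟩
    intro J' r' κ' hJ'
    cases hJ'
    exact ⟨rfl, rfl⟩
  case id =>
    refine ⟨rfl, ?_⟩
    intro J' r' κ' hJ'
    cases hJ'
    exact ⟨rfl, rfl⟩
  case defs =>
    refine ⟨rfl, ?_⟩
    intro J' r' κ' hJ'
    cases hJ'
    exact ⟨rfl, rfl⟩
  -- boolean applicators
  case anyOf =>
    rename_i Cx Jx l rs hlen hderivs IH hSub hC
    obtain ⟨Sc, hScS, hKin⟩ := hSub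
    have hIH : ∀ i (h1 : i < l.length) (h2 : i < rs.length),
        (rs.get ⟨i, h2⟩).2 = ∅ ∧
        ∀ J'' r' κ', SJudg E Cx J'' (l.get ⟨i, h1⟩) r' κ' →
          (rs.get ⟨i, h2⟩).1 = r' ∧ κ' = ∅ := by
      intro i h1 h2
      exact IH i h1 h2
        ((Relation.ReflTransGen.single ⟨_, hKin, List.get_mem l ⟨i, h1⟩⟩).trans hScS) hC
    have hκ : listUnion (rs.map (·.2)) = ∅ :=
      listUnion_map_empty (fun i h2 => (hIH i (by omega) h2).1)
    refine ⟨hκ, ?_⟩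
    intro J' r' κ' hJ'
    cases hJ' with
    | anyOf rs' hlen' hd' =>
      have hrr := rs_det hlen hlen' hIH hd'
      subst hrr
      exact ⟨rfl, hκ⟩
  case allOf =>
    rename_i Cx Jx l rs hlen hderivs IH hSub hC
    obtain ⟨Sc, hScS, hKin⟩ := hSub
    have hIH : ∀ i (h1 : i < l.length) (h2 : i < rs.length),
        (rs.get ⟨i, h2⟩).2 = ∅ ∧
        ∀ J'' r' κ', SJudg E Cx J'' (l.get ⟨i, h1⟩) r' κ' →
          (rs.get ⟨i, h2⟩).1 = r' ∧ κ' = ∅ := by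
      intro i h1 h2
      exact IH i h1 h2
        ((Relation.ReflTransGen.single ⟨_, hKin, List.get_mem l ⟨i, h1⟩⟩).trans hScS) hC
    have hκ : listUnion (rs.map (·.2)) = ∅ :=
      listUnion_map_empty (fun i h2 => (hIH i (by omega) h2).1)
    refine ⟨hκ, ?_⟩
    intro J' r' κ' hJ'
    cases hJ' with
    | allOf rs' hlen' hd' =>
      have hrr := rs_det hlen hlen' hIH hd'
      subst hrr
      exact ⟨rfl, hκ⟩
  case oneOf =>
    rename_i Cx Jx l rs hlen hderivs IH hSub hC
    obtain ⟨Sc, hScS, hKin⟩ := hSub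
    have hIH : ∀ i (h1 : i < l.length) (h2 : i < rs.length),
        (rs.get ⟨i, h2⟩).2 = ∅ ∧
        ∀ J'' r' κ', SJudg E Cx J'' (l.get ⟨i, h1⟩) r' κ' →
          (rs.get ⟨i, h2⟩).1 = r' ∧ κ' = ∅ := by
      intro i h1 h2
      exact IH i h1 h2
        ((Relation.ReflTransGen.single ⟨_, hKin, List.get_mem l ⟨i, h1⟩⟩).trans hScS) hC
    have hκ : listUnion (rs.map (·.2)) = ∅ :=
      listUnion_map_empty (fun i h2 => (hIH i (by omega) h2).1)
    refine ⟨hκ, ?_⟩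
    intro J' r' κ' hJ'
    cases hJ' with
    | oneOf rs' hlen' hd' =>
      have hrr := rs_det hlen hlen' hIH hd'
      subst hrr
      exact ⟨rfl, hκ⟩
  case not =>
    rename_i Cx Jx S0 r0 σ0 hd IH hSub hC
    obtain ⟨Sc, hScS, hKin⟩ := hSub
    obtain ⟨hσ, hinner⟩ :=
      IH ((Relation.ReflTransGen.single ⟨_, hKin, by simp [Keyword.subschemas]⟩).trans hScS) hC
    refine ⟨hσ, ?_⟩
    intro J' r' κ' hJ'
    cases hJ' with
    | not h' =>
      obtain ⟨hb, he⟩ := hinner _ _ _ h'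
      exact ⟨by rw [hb], he⟩
  case ref =>
    rename_i Cx Jx u f S' r0 σ0 hget hd IH hSub hC
    obtain ⟨Sc, hScS, hKin⟩ := hSub
    have hloadu : Subschema (E.load u) S := hclosed Sc hScS u f (Or.inl hKin)
    have hS'S : Subschema S' S := (hcoh.1 _ f S' hget).trans hloadu
    obtain ⟨hσ, hinner⟩ := IH hS'S (ctxOf_saturate hC hloadu)
    refine ⟨hσ, ?_⟩
    intro J' r' κ' hJ'
    cases hJ' with
    | ref hget' hd' =>
      rw [hget] at hget'
      injection hget' with hSS
      subst hSS
      exact hinner _ _ _ hd'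
  case dynamicRefAsRef =>
    rename_i Cx Jx u f S' r0 σ0 hdg hget hd IH hSub hC
    obtain ⟨Sc, hScS, hKin⟩ := hSub
    have hloadu : Subschema (E.load u) S := hclosed Sc hScS u f (Or.inr hKin)
    have hS'S : Subschema S' S := (hcoh.1 _ f S' hget).trans hloadu
    obtain ⟨hσ, hinner⟩ := IH hS'S (ctxOf_saturate hC hloadu)
    refine ⟨hσ, ?_⟩
    intro J' r' κ' hJ'
    cases hJ' with
    | dynamicRefAsRef hdg' hget' hd' =>
      rw [hget] at hget'
      injection hget' with hSS
      subst hSS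
      exact hinner _ _ _ hd'
    | dynamicRef hsome _ _ _ =>
      rw [hdg] at hsome
      simp at hsome
  case dynamicRef =>
    rename_i Cx Jx u f v S' r0 σ0 hsome hfst hdg hd IH hSub hC
    obtain ⟨Sc, hScS, hKin⟩ := hSub
    have hv : v ∈ saturate Cx u := List.mem_of_find?_eq_some hfst
    have hloadv : Subschema (E.load v) S := by
      unfold saturate at hv
      split at hv
      · exact hC.2 v hv
      · rcases List.mem_append.1 hv with h | h
        · exact hC.2 v h
        · simp at h
          subst h
          exact hclosed Sc hScS v f (Or.inr hKin)
    have hS'S : Subschema S' S := ((hcoh.2 _ f S' hdg).1).trans hloadv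
    obtain ⟨hσ, hinner⟩ := IH hS'S (ctxOf_saturate hC hloadv)
    refine ⟨hσ, ?_⟩
    intro J' r' κ' hJ'
    cases hJ' with
    | dynamicRefAsRef hdg' _ _ =>
      rw [hdg'] at hsome
      simp at hsome
    | dynamicRef hsome' hfst' hdg' hd' =>
      rw [hfst] at hfst'
      injection hfst' with hvv
      subst hvv
      rw [hdg] at hdg'
      injection hdg' with hSS
      subst hSS
      exact hinner _ _ _ hd'
  -- keyword lists
  case nil =>
    refine ⟨rfl, ?_⟩
    intro J' r' κ' hJ'
    obtain ⟨hr, hκ⟩ := LJudg_nil_inv hJ'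
    exact ⟨hr.symm, hκ⟩
  case snocIndep =>
    rename_i Cx Jx Ks K rl κl r0 κ0 hdep hLd hKd IHL IHK hSub hC
    obtain ⟨Sc, hScS, hmem⟩ := hSub
    have hK : K ∈ Sc.keywords := hmem K (by simp)
    obtain ⟨hκl, hinnL⟩ := IHL ⟨Sc, hScS, fun K' hK' => hmem K' (by simp [hK'])⟩ hC
    obtain ⟨hκ, hinnK⟩ := IHK ⟨Sc, hScS, hK⟩ hC
    refine ⟨by simp [hκl, hκ], ?_⟩
    intro J' r' κ' hJ'
    rcases LJudg_snoc_inv hJ' with hdep' | ⟨rl', κl', r'', κ'', hLd', hKd', hr', hκ'⟩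
    · rw [hdep] at hdep'
      exact absurd hdep' (by simp)
    · obtain ⟨hbl, hel⟩ := hinnL _ _ _ hLd'
      obtain ⟨hbk, hek⟩ := hinnK _ _ _ hKd'
      subst hr'
      subst hκ'
      exact ⟨by rw [hbl, hbk], by simp [hel, hek]⟩
  case additionalPropertiesTriv =>
    rename_i hSub hC
    obtain ⟨Sc, hScS, hmem⟩ := hSub
    exact absurd (hlog Sc hScS _ (hmem _ (List.mem_append_right _ (List.mem_singleton_self _)))) (by simp [Keyword.isLogical])
  case additionalProperties =>
    rename_i hSub hC
    obtain ⟨Sc, hScS, hmem⟩ := hSub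
    exact absurd (hlog Sc hScS _ (hmem _ (List.mem_append_right _ (List.mem_singleton_self _)))) (by simp [Keyword.isLogical])
  case unevaluatedPropertiesTriv =>
    rename_i hSub hC
    obtain ⟨Sc, hScS, hmem⟩ := hSub
    exact absurd (hlog Sc hScS _ (hmem _ (List.mem_append_right _ (List.mem_singleton_self _)))) (by simp [Keyword.isLogical])
  case unevaluatedProperties =>
    rename_i hSub hC
    obtain ⟨Sc, hScS, hmem⟩ := hSub
    exact absurd (hlog Sc hScS _ (hmem _ (List.mem_append_right _ (List.mem_singleton_self _)))) (by simp [Keyword.isLogical])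
  case itemsTriv =>
    rename_i hSub hC
    obtain ⟨Sc, hScS, hmem⟩ := hSub
    exact absurd (hlog Sc hScS _ (hmem _ (List.mem_append_right _ (List.mem_singleton_self _)))) (by simp [Keyword.isLogical])
  case items =>
    rename_i hSub hC
    obtain ⟨Sc, hScS, hmem⟩ := hSub
    exact absurd (hlog Sc hScS _ (hmem _ (List.mem_append_right _ (List.mem_singleton_self _)))) (by simp [Keyword.isLogical])
  case unevaluatedItemsTriv =>
    rename_i hSub hC
    obtain ⟨Sc, hScS, hmem⟩ := hSub
    exact absurd (hlog Sc hScS _ (hmem _ (List.mem_append_right _ (List.mem_singleton_self _)))) (by simp [Keyword.isLogical])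
  case unevaluatedItems =>
    rename_i hSub hC
    obtain ⟨Sc, hScS, hmem⟩ := hSub
    exact absurd (hlog Sc hScS _ (hmem _ (List.mem_append_right _ (List.mem_singleton_self _)))) (by simp [Keyword.isLogical])

/-- Schemas built only from logical operators are trivial:
the validation result does not depend on the instance and no annotations are
produced. -/
theorem statement5 (E : Env) (S : Schema)
    (hcoh : EnvCoherent E) (hclosed : Closed E S) (hlog : Logical S) :
    ∀ C : Ctx, CtxOf E S C → ∀ (J J' : JVal) (r r' : Bool) (κ κ' : Finset Ann),
      SJudg E C J S r κ → SJudg E C J' S r' κ' →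
      r = r' ∧ κ = ∅ ∧ κ' = ∅ := by
  intro C hC J J' r r' κ κ' h h'
  obtain ⟨hκ, hinner⟩ := statement5_aux E S hcoh hclosed hlog h Relation.ReflTransGen.refl hC
  obtain ⟨hr, hκ'⟩ := hinner J' r' κ' h'
  exact ⟨hr, hκ, hκ'⟩

end MJS
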